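/- arXiv:1602.04570 — 2 statements merged into one kernel-verified Lean document; each statement's English description precedes it below -/
import Mathlib

section
/- Let 0 < γ < 1. There exists a constant C_γ such that for every Schwartz function f on ℝ, the fractional Laplacian admits the singular integral representation (-Δ)^{γ/2} f(x) = C_γ ∫_ℝ (f(x) - f(y))/|x - y|^{1+γ} dy. Moreover ‖(-Δ)^{γ/2} f‖_{L∞} ≲ ‖f‖_{L∞} + ‖f'‖_{L∞}. -/
open MeasureTheory Real

/-- The fractional Laplacian `(-Δ)^{γ/2}` defined via the Fourier multiplier `(2π|ξ|)^γ`. -/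
noncomputable def fracLap (γ : ℝ) (f : ℝ → ℂ) (x : ℝ) : ℂ :=
  ∫ ξ : ℝ, ((2 * π * |ξ|) ^ γ : ℝ) •
    (FourierTransform.fourier f ξ * Complex.exp (((2 * π * ξ * x : ℝ) : ℂ) * Complex.I))

namespace FracLapAux

open Set FourierTransform Function

lemma one_sub_cos_le_sq (t : ℝ) : 1 - Real.cos t ≤ t ^ 2 / 2 := by
  have h1 : Real.sin (t / 2) ^ 2 = 1 / 2 - Real.cos t / 2 := by
    have := Real.sin_sq_eq_half_sub (t / 2)
    rwa [show 2 * (t / 2) = t by ring] at this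
  have h2 : Real.sin (t / 2) ^ 2 ≤ (t / 2) ^ 2 := by
    rw [← sq_abs (Real.sin (t / 2)), ← sq_abs (t / 2)]
    exact pow_le_pow_left₀ (abs_nonneg _) Real.abs_sin_le_abs 2
  nlinarith

lemma one_sub_cos_nonneg (t : ℝ) : 0 ≤ 1 - Real.cos t := by
  nlinarith [Real.cos_le_one t]

lemma one_sub_cos_le_two (t : ℝ) : 1 - Real.cos t ≤ 2 := by
  nlinarith [Real.neg_one_le_cos t]

/-- integrability of even functions from integrability on `(0,∞)`. -/
lemma integrable_comp_abs {g : ℝ → ℝ} (hg : IntegrableOn (fun t => g |t|) (Ioi 0)) :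
    Integrable (fun t => g |t|) := by
  have int_Iic : IntegrableOn (fun x => g |x|) (Iic 0) := by
    rw [← Measure.map_neg_eq_self (volume : Measure ℝ)]
    have m : MeasurableEmbedding fun x : ℝ => -x := (Homeomorph.neg ℝ).measurableEmbedding
    rw [m.integrableOn_map_iff]
    simp_rw [Function.comp_def, abs_neg, Set.neg_preimage, Set.neg_Iic, neg_zero]
    exact Iff.mpr integrableOn_Ici_iff_integrableOn_Ioi hg
  rw [← integrableOn_univ, ← Set.Iic_union_Ioi (a := (0 : ℝ))]
  exact int_Iic.union hg

/-- The kernel profile. -/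
noncomputable def G (γ : ℝ) (u : ℝ) : ℝ := (1 - Real.cos (2 * π * u)) / |u| ^ (1 + γ)

lemma G_nonneg (γ : ℝ) (u : ℝ) : 0 ≤ G γ u :=
  div_nonneg (one_sub_cos_nonneg _) (Real.rpow_nonneg (abs_nonneg _) _)

lemma G_meas (γ : ℝ) : Measurable (G γ) := by unfold G; fun_prop

lemma integrableOn_G_Ioi {γ : ℝ} (h0 : 0 < γ) (h1 : γ < 1) :
    IntegrableOn (G γ) (Ioi (0 : ℝ)) := by
  rw [← Set.Ioc_union_Ioi_eq_Ioi (zero_le_one (α := ℝ))]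
  apply IntegrableOn.union
  · have hint : IntegrableOn (fun t : ℝ => 2 * π ^ 2 * t ^ (1 - γ)) (Ioc (0 : ℝ) 1) := by
      refine Integrable.const_mul ?_ _
      exact (intervalIntegrable_iff_integrableOn_Ioc_of_le zero_le_one).mp
        (intervalIntegral.intervalIntegrable_rpow' (by linarith))
    apply Integrable.mono' hint ((G_meas γ).aestronglyMeasurable.restrict)
    filter_upwards [ae_restrict_mem measurableSet_Ioc] with t ht
    have ht0 : 0 < t := ht.1
    rw [Real.norm_eq_abs, abs_of_nonneg (G_nonneg γ t)]
    unfold G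
    rw [abs_of_pos ht0, div_le_iff₀ (Real.rpow_pos_of_pos ht0 _)]
    have hsq : t ^ ((2 : ℕ) : ℝ) = t ^ (2 : ℕ) := Real.rpow_natCast t 2
    have hmul : 2 * π ^ 2 * t ^ (1 - γ) * t ^ (1 + γ) = 2 * π ^ 2 * t ^ ((2 : ℕ) : ℝ) := by
      rw [mul_assoc, ← Real.rpow_add ht0]; norm_num
    rw [hmul, hsq]
    have h2 := one_sub_cos_le_sq (2 * π * t)
    nlinarith
  · apply Integrable.mono'
      ((integrableOn_Ioi_rpow_of_lt (show -(1 + γ) < -1 by linarith) one_pos).const_mul 2)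
      ((G_meas γ).aestronglyMeasurable.restrict)
    filter_upwards [ae_restrict_mem measurableSet_Ioi] with t ht
    have ht0 : (0 : ℝ) < t := lt_trans one_pos ht
    have hp : (0 : ℝ) < t ^ (1 + γ) := Real.rpow_pos_of_pos ht0 _
    rw [Real.norm_eq_abs, abs_of_nonneg (G_nonneg γ t)]
    unfold G
    have hcan : 2 * t ^ (-(1 + γ)) * t ^ (1 + γ) = 2 := by
      rw [Real.rpow_neg ht0.le]
      field_simp
    rw [abs_of_pos ht0, div_le_iff₀ hp, hcan]
    exact one_sub_cos_le_two _

lemma integrable_G {γ : ℝ} (h0 : 0 < γ) (h1 : γ < 1) : Integrable (G γ) := by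
  have habs : (G γ) = fun u => G γ |u| := by
    funext u
    have hc : Real.cos (2 * π * |u|) = Real.cos (2 * π * u) := by
      rw [show 2 * π * |u| = |2 * π * u| by
        rw [abs_mul, abs_of_pos (by positivity : (0 : ℝ) < 2 * π)], Real.cos_abs]
    simp [G, abs_abs, hc]
  rw [habs]
  apply integrable_comp_abs
  exact (integrableOn_G_Ioi h0 h1).congr_fun (fun t ht => by rw [abs_of_pos ht])
    measurableSet_Ioi

/-- The normalisation constant. -/
noncomputable def Kc (γ : ℝ) : ℝ := ∫ u : ℝ, G γ u

lemma Kc_pos {γ : ℝ} (h0 : 0 < γ) (h1 : γ < 1) : 0 < Kc γ := by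
  rw [Kc]
  rw [integral_pos_iff_support_of_nonneg (G_nonneg γ) (integrable_G h0 h1)]
  have hsub : Ioo (0 : ℝ) (1 / 2) ⊆ Function.support (G γ) := by
    intro u hu
    have hu0 : 0 < u := hu.1
    have h1u : 0 < 2 * π * u := by positivity
    have h2u : 2 * π * u ≤ π := by nlinarith [hu.2, Real.pi_pos]
    have hcos : Real.cos (2 * π * u) < 1 := by
      have := Real.cos_lt_cos_of_nonneg_of_le_pi (le_refl 0) h2u h1u
      rwa [Real.cos_zero] at this
    have hden : (0 : ℝ) < |u| ^ (1 + γ) :=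
      Real.rpow_pos_of_pos (abs_pos.2 hu0.ne') _
    simp only [Function.mem_support, G]
    exact div_ne_zero (by linarith) hden.ne'
  refine lt_of_lt_of_le ?_ (measure_mono hsub)
  rw [Real.volume_Ioo]
  norm_num

lemma kernel_eq {γ : ℝ} {ξ : ℝ} (hξ : ξ ≠ 0) (h : ℝ) :
    (1 - Real.cos (2 * π * ξ * h)) / |h| ^ (1 + γ) = |ξ| ^ (1 + γ) * G γ (ξ * h) := by
  unfold G
  rw [show 2 * π * (ξ * h) = 2 * π * ξ * h by ring, abs_mul,
    Real.mul_rpow (abs_nonneg ξ) (abs_nonneg h)]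
  rcases eq_or_ne h 0 with rfl | hh
  · simp
  · have h1 : (|ξ| : ℝ) ^ (1 + γ) ≠ 0 := (Real.rpow_pos_of_pos (abs_pos.2 hξ) _).ne'
    have h2 : (|h| : ℝ) ^ (1 + γ) ≠ 0 := (Real.rpow_pos_of_pos (abs_pos.2 hh) _).ne'
    field_simp

lemma scaling_integrable {γ : ℝ} (h0 : 0 < γ) (h1 : γ < 1) {ξ : ℝ} (hξ : ξ ≠ 0) :
    Integrable (fun h : ℝ => (1 - Real.cos (2 * π * ξ * h)) / |h| ^ (1 + γ)) := by
  have : (fun h : ℝ => (1 - Real.cos (2 * π * ξ * h)) / |h| ^ (1 + γ))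
      = fun h => |ξ| ^ (1 + γ) * G γ (ξ * h) := funext (kernel_eq hξ)
  rw [this]
  exact ((integrable_G h0 h1).comp_mul_left' hξ).const_mul _

lemma scaling {γ : ℝ} (h0 : 0 < γ) (h1 : γ < 1) (ξ : ℝ) :
    ∫ h : ℝ, (1 - Real.cos (2 * π * ξ * h)) / |h| ^ (1 + γ) = |ξ| ^ γ * Kc γ := by
  rcases eq_or_ne ξ 0 with rfl | hξ
  · simp [Real.zero_rpow h0.ne']
  · simp only [kernel_eq hξ]
    rw [integral_const_mul, Measure.integral_comp_mul_left (G γ) ξ, smul_eq_mul, abs_inv,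
      show (∫ y : ℝ, G γ y) = Kc γ from rfl]
    rw [show |ξ| ^ (1 + γ) * (|ξ|⁻¹ * Kc γ) = |ξ| ^ (1 + γ) * |ξ|⁻¹ * Kc γ by ring]
    congr 1
    rw [← Real.rpow_neg_one |ξ|, ← Real.rpow_add (abs_pos.2 hξ)]
    norm_num

lemma fourier_integrable (f : SchwartzMap ℝ ℂ) : Integrable (𝓕 ⇑f) := by
  have := (SchwartzMap.fourierTransformCLM ℝ f).integrable (μ := volume)
  rwa [SchwartzMap.fourierTransformCLM_apply] at this

lemma fourier_continuous (f : SchwartzMap ℝ ℂ) : Continuous (𝓕 ⇑f) := by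
  have := (SchwartzMap.fourierTransformCLM ℝ f).continuous
  rwa [SchwartzMap.fourierTransformCLM_apply] at this

lemma fourier_inv (f : SchwartzMap ℝ ℂ) (a : ℝ) :
    ∫ ξ : ℝ, 𝓕 ⇑f ξ * Complex.exp (((2 * π * ξ * a : ℝ) : ℂ) * Complex.I) = f a := by
  have hinv := Continuous.fourierInv_fourier_eq f.continuous f.integrable (fourier_integrable f)
  have h2 := congrFun hinv a
  rw [fourierInv_eq'] at h2
  rw [← h2]
  congr 1
  funext ξ
  rw [smul_eq_mul, mul_comm]
  congr 3
  simp [RCLike.inner_apply]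
  ring

lemma integrable_mul_exp (f : SchwartzMap ℝ ℂ) (a : ℝ) :
    Integrable (fun ξ : ℝ => 𝓕 ⇑f ξ * Complex.exp (((2 * π * ξ * a : ℝ) : ℂ) * Complex.I)) := by
  have hcont : Continuous fun ξ : ℝ =>
      Complex.exp (((2 * π * ξ * a : ℝ) : ℂ) * Complex.I) := by fun_prop
  have := Integrable.bdd_mul (fourier_integrable f) hcont.aestronglyMeasurable
    (c := 1) (ae_of_all _ fun ξ => le_of_eq (Complex.norm_exp_ofReal_mul_I _))
  exact this.congr (ae_of_all _ fun ξ => mul_comm _ _)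

lemma exp_pair (a b : ℝ) :
    Complex.exp (((b + a : ℝ) : ℂ) * Complex.I) + Complex.exp (((b - a : ℝ) : ℂ) * Complex.I)
      = 2 * ((Real.cos a : ℝ) : ℂ) * Complex.exp ((b : ℂ) * Complex.I) := by
  push_cast [Complex.ofReal_cos]
  rw [show ((b : ℂ) + a) * Complex.I = (b : ℂ) * Complex.I + (a : ℂ) * Complex.I by ring,
    show ((b : ℂ) - a) * Complex.I = (b : ℂ) * Complex.I + (-(a : ℂ)) * Complex.I by ring]
  simp only [Complex.exp_add, Complex.exp_mul_I, Complex.cos_neg, Complex.sin_neg]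
  ring

lemma ptwise (z : ℂ) (a b : ℝ) :
    ((1 - Real.cos a : ℝ)) • (z * Complex.exp ((b : ℂ) * Complex.I)) =
      z * Complex.exp ((b : ℂ) * Complex.I)
        - z * Complex.exp (((b + a : ℝ) : ℂ) * Complex.I) / 2
        - z * Complex.exp (((b - a : ℝ) : ℂ) * Complex.I) / 2 := by
  have hp := exp_pair a b
  rw [Complex.real_smul]
  push_cast [Complex.ofReal_cos] at hp ⊢
  linear_combination (z / 2) * hp

lemma inner_integral (f : SchwartzMap ℝ ℂ) (x h : ℝ) :
    (∫ ξ : ℝ, ((1 - Real.cos (2 * π * ξ * h)) : ℝ) •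
        (𝓕 ⇑f ξ * Complex.exp (((2 * π * ξ * x : ℝ) : ℂ) * Complex.I)))
      = f x - (f (x + h) + f (x - h)) / 2 := by
  have key : ∀ ξ : ℝ, ((1 - Real.cos (2 * π * ξ * h)) : ℝ) •
        (𝓕 ⇑f ξ * Complex.exp (((2 * π * ξ * x : ℝ) : ℂ) * Complex.I))
      = 𝓕 ⇑f ξ * Complex.exp (((2 * π * ξ * x : ℝ) : ℂ) * Complex.I)
        - 𝓕 ⇑f ξ * Complex.exp (((2 * π * ξ * (x + h) : ℝ) : ℂ) * Complex.I) / 2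
        - 𝓕 ⇑f ξ * Complex.exp (((2 * π * ξ * (x - h) : ℝ) : ℂ) * Complex.I) / 2 := by
    intro ξ
    have e1 : 2 * π * ξ * (x + h) = 2 * π * ξ * x + 2 * π * ξ * h := by ring
    have e2 : 2 * π * ξ * (x - h) = 2 * π * ξ * x - 2 * π * ξ * h := by ring
    rw [e1, e2]
    exact ptwise _ _ _
  simp only [key]
  have hI1 := integrable_mul_exp f x
  have hI2 : Integrable (fun ξ : ℝ =>
      𝓕 ⇑f ξ * Complex.exp (((2 * π * ξ * (x + h) : ℝ) : ℂ) * Complex.I) / 2) :=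
    (integrable_mul_exp f (x + h)).div_const 2
  have hI3 : Integrable (fun ξ : ℝ =>
      𝓕 ⇑f ξ * Complex.exp (((2 * π * ξ * (x - h) : ℝ) : ℂ) * Complex.I) / 2) :=
    (integrable_mul_exp f (x - h)).div_const 2
  have hI12 : Integrable (fun ξ : ℝ =>
      𝓕 ⇑f ξ * Complex.exp (((2 * π * ξ * x : ℝ) : ℂ) * Complex.I)
        - 𝓕 ⇑f ξ * Complex.exp (((2 * π * ξ * (x + h) : ℝ) : ℂ) * Complex.I) / 2) :=
    hI1.sub hI2
  rw [integral_sub hI12 hI3, integral_sub hI1 hI2,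
    integral_div, integral_div, fourier_inv f x, fourier_inv f (x + h), fourier_inv f (x - h)]
  ring

/-- the dominating function for the singular integral -/
lemma psi_integrable {γ : ℝ} (h0 : 0 < γ) (h1 : γ < 1) :
    Integrable (fun h : ℝ => min (|h| ^ (-γ)) (|h| ^ (-(1 + γ)))) := by
  have habs : (fun h : ℝ => min (|h| ^ (-γ)) (|h| ^ (-(1 + γ))))
      = fun h : ℝ => min (|(|h|)| ^ (-γ)) (|(|h|)| ^ (-(1 + γ))) := by
    funext h; rw [abs_abs]
  rw [habs]
  apply integrable_comp_abs (g := fun t => min (|t| ^ (-γ)) (|t| ^ (-(1 + γ))))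
  have hmeas : Measurable fun t : ℝ => min (|t| ^ (-γ)) (|t| ^ (-(1 + γ))) := by fun_prop
  have hIoi : IntegrableOn (fun t : ℝ => min (|t| ^ (-γ)) (|t| ^ (-(1 + γ)))) (Ioi (0:ℝ)) := by
    rw [← Set.Ioc_union_Ioi_eq_Ioi (zero_le_one (α := ℝ))]
    apply IntegrableOn.union
    · apply Integrable.mono' ((intervalIntegrable_iff_integrableOn_Ioc_of_le zero_le_one).mp
        (intervalIntegral.intervalIntegrable_rpow' (show (-1 : ℝ) < -γ by linarith)))
        (hmeas.aestronglyMeasurable.restrict)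
      filter_upwards [ae_restrict_mem measurableSet_Ioc] with t ht
      have ht0 : 0 < t := ht.1
      have hnn : 0 ≤ min (|t| ^ (-γ)) (|t| ^ (-(1 + γ))) :=
        le_min (Real.rpow_nonneg (abs_nonneg _) _) (Real.rpow_nonneg (abs_nonneg _) _)
      rw [Real.norm_eq_abs, abs_of_nonneg hnn, abs_of_pos ht0]
      exact min_le_left _ _
    · apply Integrable.mono'
        (integrableOn_Ioi_rpow_of_lt (show -(1 + γ) < -1 by linarith) one_pos)
        (hmeas.aestronglyMeasurable.restrict)
      filter_upwards [ae_restrict_mem measurableSet_Ioi] with t ht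
      have ht0 : (0 : ℝ) < t := lt_trans one_pos ht
      have hnn : 0 ≤ min (|t| ^ (-γ)) (|t| ^ (-(1 + γ))) :=
        le_min (Real.rpow_nonneg (abs_nonneg _) _) (Real.rpow_nonneg (abs_nonneg _) _)
      rw [Real.norm_eq_abs, abs_of_nonneg hnn, abs_of_pos ht0]
      exact min_le_right _ _
  exact hIoi.congr_fun (fun t ht => by rw [abs_abs]) measurableSet_Ioi

lemma T_bound {γ : ℝ} (h0 : 0 < γ) (h1 : γ < 1) (f : SchwartzMap ℝ ℂ) (x : ℝ) {M M' : ℝ}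
    (hM : ∀ y, ‖f y‖ ≤ M) (hM' : ∀ y, ‖deriv (⇑f) y‖ ≤ M') (y : ℝ) :
    ‖(f x - f y) / ((|x - y| ^ (1 + γ) : ℝ) : ℂ)‖
      ≤ (2 * M + M') * min (|x - y| ^ (-γ)) (|x - y| ^ (-(1 + γ))) := by
  have hM0 : 0 ≤ M := le_trans (norm_nonneg _) (hM 0)
  have hM'0 : 0 ≤ M' := le_trans (norm_nonneg _) (hM' 0)
  have hminnn : 0 ≤ min (|x - y| ^ (-γ)) (|x - y| ^ (-(1 + γ))) :=
    le_min (Real.rpow_nonneg (abs_nonneg _) _) (Real.rpow_nonneg (abs_nonneg _) _)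
  rcases eq_or_ne x y with rfl | hxy
  · have hz : (f x - f x) / ((|x - x| ^ (1 + γ) : ℝ) : ℂ) = 0 := by simp
    rw [hz, norm_zero]
    exact mul_nonneg (by linarith) hminnn
  · have hd : (0 : ℝ) < |x - y| := abs_pos.2 (sub_ne_zero.2 hxy)
    have hrp : (0 : ℝ) < |x - y| ^ (1 + γ) := Real.rpow_pos_of_pos hd _
    have hLip : ‖f x - f y‖ ≤ M' * |x - y| := by
      have := Convex.norm_image_sub_le_of_norm_deriv_le (f := ⇑f) (s := Set.univ)
        (fun z _ => f.differentiableAt) (fun z _ => hM' z) convex_univ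
        (Set.mem_univ y) (Set.mem_univ x)
      simpa [Real.norm_eq_abs] using this
    have hB : ‖f x - f y‖ ≤ 2 * M := by
      have := norm_sub_le (f x) (f y)
      have h1 := hM x; have h2 := hM y
      linarith
    have hnorm : ‖(f x - f y) / ((|x - y| ^ (1 + γ) : ℝ) : ℂ)‖
        = ‖f x - f y‖ / (|x - y| ^ (1 + γ)) := by
      rw [norm_div, Complex.norm_real, Real.norm_eq_abs, abs_of_nonneg hrp.le]
    rw [hnorm]
    have b1 : ‖f x - f y‖ / |x - y| ^ (1 + γ) ≤ (2 * M + M') * (|x - y| ^ (-(1 + γ))) := by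
      rw [Real.rpow_neg (abs_nonneg _), div_le_iff₀ hrp, mul_assoc,
        inv_mul_cancel₀ hrp.ne', mul_one]
      linarith
    have b2 : ‖f x - f y‖ / |x - y| ^ (1 + γ) ≤ (2 * M + M') * (|x - y| ^ (-γ)) := by
      have step : ‖f x - f y‖ / |x - y| ^ (1 + γ) ≤ (M' * |x - y|) / |x - y| ^ (1 + γ) := by
        gcongr
      have heq : (M' * |x - y|) / |x - y| ^ (1 + γ) = M' * (|x - y| ^ (-γ)) := by
        rw [mul_div_assoc]
        congr 1
        rw [show |x - y| / |x - y| ^ (1 + γ)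
            = |x - y| ^ (1 : ℝ) / |x - y| ^ (1 + γ) by rw [Real.rpow_one],
          ← Real.rpow_sub hd]
        norm_num
      refine step.trans ?_
      rw [heq]
      exact mul_le_mul_of_nonneg_right (by linarith) (Real.rpow_nonneg (abs_nonneg _) _)
    have hsplit : (2 * M + M') * min (|x - y| ^ (-γ)) (|x - y| ^ (-(1 + γ)))
        = min ((2 * M + M') * (|x - y| ^ (-γ))) ((2 * M + M') * (|x - y| ^ (-(1 + γ)))) := by
      rcases min_cases (|x - y| ^ (-γ)) (|x - y| ^ (-(1 + γ))) with ⟨hmin, hle⟩ | ⟨hmin, hle⟩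
      · rw [hmin, min_eq_left (by nlinarith)]
      · rw [hmin, min_eq_right (by nlinarith)]
    rw [hsplit]
    exact le_min b2 b1

end FracLapAux

open FracLapAux Set FourierTransform Function

/-- For `0 < γ < 1` there is a constant `C_γ` such that for every Schwartz `f`,
`(-Δ)^{γ/2} f(x) = C_γ ∫ (f(x) - f(y))/|x-y|^{1+γ} dy`, and moreover
`‖(-Δ)^{γ/2} f‖_∞ ≲ ‖f‖_∞ + ‖f'‖_∞`. -/
theorem stmt1 (γ : ℝ) (h0 : 0 < γ) (h1 : γ < 1) :
    (∃ C : ℝ, ∀ f : SchwartzMap ℝ ℂ, ∀ x : ℝ,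
      fracLap γ (fun y => f y) x =
        (C : ℂ) * ∫ y : ℝ, (f x - f y) / ((|x - y| ^ (1 + γ) : ℝ) : ℂ)) ∧
    ∃ C' : ℝ, 0 < C' ∧ ∀ f : SchwartzMap ℝ ℂ, ∀ x : ℝ,
      ‖fracLap γ (fun y => f y) x‖ ≤
        C' * ((⨆ y : ℝ, ‖f y‖) + ⨆ y : ℝ, ‖deriv (fun z : ℝ => f z) y‖) := by
  have h2π : (0 : ℝ) < 2 * π := by positivity
  have hK := Kc_pos h0 h1
  have hne : ∀ᵐ ξ : ℝ, ξ ≠ 0 := by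
    filter_upwards [compl_mem_ae_iff.mpr (measure_singleton (0 : ℝ))] with ξ hξ
    simpa using hξ
  have main : ∀ f : SchwartzMap ℝ ℂ, ∀ x : ℝ,
      fracLap γ (fun y => f y) x =
        (((2 * π) ^ γ / Kc γ : ℝ) : ℂ) * ∫ y : ℝ, (f x - f y) / ((|x - y| ^ (1 + γ) : ℝ) : ℂ) := by
    intro f x
    have hfm : Measurable (⇑f) := f.continuous.measurable
    have hM : ∀ y, ‖f y‖ ≤ (SchwartzMap.seminorm ℝ 0 0) f :=
      fun y => SchwartzMap.norm_le_seminorm ℝ f y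
    have hM' : ∀ y, ‖deriv (⇑f) y‖ ≤ (SchwartzMap.seminorm ℝ 0 0) (SchwartzMap.derivCLM ℝ ℂ f) := by
      intro y
      rw [← SchwartzMap.derivCLM_apply (𝕜 := ℝ)]
      exact SchwartzMap.norm_le_seminorm ℝ _ y
    have hTint : Integrable (fun y : ℝ => (f x - f y) / ((|x - y| ^ (1 + γ) : ℝ) : ℂ)) := by
      apply Integrable.mono'
        (((psi_integrable h0 h1).comp_sub_left x).const_mul
          (2 * (SchwartzMap.seminorm ℝ 0 0) f + (SchwartzMap.seminorm ℝ 0 0) (SchwartzMap.derivCLM ℝ ℂ f)))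
      · apply Measurable.aestronglyMeasurable
        fun_prop
      · exact ae_of_all _ (fun y => T_bound h0 h1 f x hM hM' y)
    -- the double integral
    have hgc : Continuous fun ξ : ℝ =>
        𝓕 ⇑f ξ * Complex.exp (((2 * π * ξ * x : ℝ) : ℂ) * Complex.I) := by
      have h1c := fourier_continuous f
      fun_prop
    have hFmeas : AEStronglyMeasurable
        (uncurry fun ξ h : ℝ => ((1 - Real.cos (2 * π * ξ * h)) / |h| ^ (1 + γ)) •
          (𝓕 ⇑f ξ * Complex.exp (((2 * π * ξ * x : ℝ) : ℂ) * Complex.I)))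
        (volume.prod volume) := by
      have hker : Measurable fun p : ℝ × ℝ =>
          (1 - Real.cos (2 * π * p.1 * p.2)) / |p.2| ^ (1 + γ) := by fun_prop
      exact (hker.smul ((hgc.measurable).comp measurable_fst)).aestronglyMeasurable
    have hae : ∀ᵐ ξ : ℝ, Integrable (fun h : ℝ =>
        ((1 - Real.cos (2 * π * ξ * h)) / |h| ^ (1 + γ)) •
          (𝓕 ⇑f ξ * Complex.exp (((2 * π * ξ * x : ℝ) : ℂ) * Complex.I))) := by
      filter_upwards [hne] with ξ hξ
      exact (scaling_integrable h0 h1 hξ).smul_const _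
    have hnormint : Integrable (fun ξ : ℝ => ∫ h : ℝ,
        ‖((1 - Real.cos (2 * π * ξ * h)) / |h| ^ (1 + γ)) •
          (𝓕 ⇑f ξ * Complex.exp (((2 * π * ξ * x : ℝ) : ℂ) * Complex.I))‖) := by
      have hdom : Integrable (fun ξ : ℝ => Kc γ * ((1 + ‖ξ‖) * ‖𝓕 ⇑f ξ‖)) := by
        have i0 : Integrable (fun ξ : ℝ => ‖𝓕 ⇑f ξ‖) := (fourier_integrable f).norm
        have i1 : Integrable (fun ξ : ℝ => ‖ξ‖ * ‖𝓕 ⇑f ξ‖) := by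
          have := SchwartzMap.integrable_pow_mul volume (SchwartzMap.fourierTransformCLM ℝ f) 1
          simpa [SchwartzMap.fourierTransformCLM_apply, SchwartzMap.fourier_coe] using this
        refine ((i0.add i1).const_mul (Kc γ)).congr (ae_of_all _ fun ξ => ?_)
        simp only [Pi.add_apply]
        ring
      apply Integrable.mono' hdom (hFmeas.norm.integral_prod_right')
      filter_upwards [hne] with ξ hξ
      simp only [Function.uncurry_apply_pair]
      have hnn : 0 ≤ ∫ h : ℝ, ‖((1 - Real.cos (2 * π * ξ * h)) / |h| ^ (1 + γ)) •
          (𝓕 ⇑f ξ * Complex.exp (((2 * π * ξ * x : ℝ) : ℂ) * Complex.I))‖ :=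
        integral_nonneg fun h => norm_nonneg _
      rw [Real.norm_eq_abs, abs_of_nonneg hnn]
      have hptw : ∀ h : ℝ, ‖((1 - Real.cos (2 * π * ξ * h)) / |h| ^ (1 + γ)) •
          (𝓕 ⇑f ξ * Complex.exp (((2 * π * ξ * x : ℝ) : ℂ) * Complex.I))‖
          = ((1 - Real.cos (2 * π * ξ * h)) / |h| ^ (1 + γ)) * ‖𝓕 ⇑f ξ‖ := by
        intro h
        rw [norm_smul, Real.norm_eq_abs,
          abs_of_nonneg (div_nonneg (one_sub_cos_nonneg _) (Real.rpow_nonneg (abs_nonneg _) _)),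
          norm_mul, Complex.norm_exp_ofReal_mul_I, mul_one]
      simp only [hptw]
      rw [integral_mul_const, scaling h0 h1 ξ]
      have habs : |ξ| ^ γ ≤ 1 + ‖ξ‖ := by
        rw [Real.norm_eq_abs]
        rcases le_total |ξ| 1 with hle | hle
        · have := Real.rpow_le_one (abs_nonneg ξ) hle h0.le
          linarith [abs_nonneg ξ]
        · have h := Real.rpow_le_rpow_of_exponent_le hle h1.le
          rw [Real.rpow_one] at h
          linarith
      have : |ξ| ^ γ * Kc γ * ‖𝓕 ⇑f ξ‖ ≤ (1 + ‖ξ‖) * Kc γ * ‖𝓕 ⇑f ξ‖ := by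
        have := mul_le_mul_of_nonneg_right habs hK.le
        exact mul_le_mul_of_nonneg_right this (norm_nonneg _)
      calc |ξ| ^ γ * Kc γ * ‖𝓕 ⇑f ξ‖ ≤ (1 + ‖ξ‖) * Kc γ * ‖𝓕 ⇑f ξ‖ := this
        _ = Kc γ * ((1 + ‖ξ‖) * ‖𝓕 ⇑f ξ‖) := by ring
    have hFint : Integrable
        (uncurry fun ξ h : ℝ => ((1 - Real.cos (2 * π * ξ * h)) / |h| ^ (1 + γ)) •
          (𝓕 ⇑f ξ * Complex.exp (((2 * π * ξ * x : ℝ) : ℂ) * Complex.I)))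
        (volume.prod volume) := by
      rw [integrable_prod_iff hFmeas]
      exact ⟨hae, hnormint⟩
    have hfrac : fracLap γ (fun y => f y) x = ∫ ξ : ℝ, ((2 * π * |ξ|) ^ γ : ℝ) •
        (𝓕 ⇑f ξ * Complex.exp (((2 * π * ξ * x : ℝ) : ℂ) * Complex.I)) := rfl
    rw [hfrac]
    have step1 : (∫ ξ : ℝ, ((2 * π * |ξ|) ^ γ : ℝ) •
        (𝓕 ⇑f ξ * Complex.exp (((2 * π * ξ * x : ℝ) : ℂ) * Complex.I)))
        = ∫ ξ : ℝ, ((2 * π) ^ γ / Kc γ : ℝ) •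
            ((∫ h : ℝ, (1 - Real.cos (2 * π * ξ * h)) / |h| ^ (1 + γ)) •
              (𝓕 ⇑f ξ * Complex.exp (((2 * π * ξ * x : ℝ) : ℂ) * Complex.I))) := by
      congr 1
      funext ξ
      rw [scaling h0 h1 ξ, smul_smul]
      congr 1
      rw [Real.mul_rpow h2π.le (abs_nonneg ξ)]
      field_simp
    rw [step1, integral_smul]
    have step2 : (∫ ξ : ℝ, ((∫ h : ℝ, (1 - Real.cos (2 * π * ξ * h)) / |h| ^ (1 + γ)) •
              (𝓕 ⇑f ξ * Complex.exp (((2 * π * ξ * x : ℝ) : ℂ) * Complex.I))))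
        = ∫ ξ : ℝ, ∫ h : ℝ, ((1 - Real.cos (2 * π * ξ * h)) / |h| ^ (1 + γ)) •
              (𝓕 ⇑f ξ * Complex.exp (((2 * π * ξ * x : ℝ) : ℂ) * Complex.I)) := by
      congr 1
      funext ξ
      exact (integral_smul_const _ _).symm
    rw [step2, integral_integral_swap hFint]
    have step3 : (∫ h : ℝ, ∫ ξ : ℝ, ((1 - Real.cos (2 * π * ξ * h)) / |h| ^ (1 + γ)) •
              (𝓕 ⇑f ξ * Complex.exp (((2 * π * ξ * x : ℝ) : ℂ) * Complex.I)))
        = ∫ h : ℝ, ((|h| ^ (1 + γ) : ℝ))⁻¹ • (f x - (f (x + h) + f (x - h)) / 2) := by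
      congr 1
      funext h
      have hpt : ∀ ξ : ℝ, ((1 - Real.cos (2 * π * ξ * h)) / |h| ^ (1 + γ)) •
              (𝓕 ⇑f ξ * Complex.exp (((2 * π * ξ * x : ℝ) : ℂ) * Complex.I))
          = ((|h| ^ (1 + γ) : ℝ))⁻¹ • (((1 - Real.cos (2 * π * ξ * h)) : ℝ) •
              (𝓕 ⇑f ξ * Complex.exp (((2 * π * ξ * x : ℝ) : ℂ) * Complex.I))) := by
        intro ξ
        rw [smul_smul, div_eq_mul_inv, mul_comm]
      simp only [hpt]
      rw [integral_smul, inner_integral f x h]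
    rw [step3]
    have step4 : (∫ h : ℝ, ((|h| ^ (1 + γ) : ℝ))⁻¹ • (f x - (f (x + h) + f (x - h)) / 2))
        = ∫ h : ℝ, (2⁻¹ : ℝ) •
            ((f x - f (x + h)) / ((|x - (x + h)| ^ (1 + γ) : ℝ) : ℂ)
              + (f x - f (x - h)) / ((|x - (x - h)| ^ (1 + γ) : ℝ) : ℂ)) := by
      congr 1
      funext h
      have e1 : |x - (x + h)| = |h| := by rw [show x - (x + h) = -h by ring, abs_neg]
      have e2 : |x - (x - h)| = |h| := by rw [show x - (x - h) = h by ring]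
      rw [e1, e2, Complex.real_smul, Complex.real_smul]
      push_cast
      rcases eq_or_ne (|h| ^ (1 + γ) : ℝ) 0 with hr | hr
      · rw [hr]; simp
      · have hr' : ((|h| ^ (1 + γ) : ℝ) : ℂ) ≠ 0 := by exact_mod_cast hr
        field_simp
        ring
    have hIadd : Integrable (fun h : ℝ =>
        (f x - f (x + h)) / ((|x - (x + h)| ^ (1 + γ) : ℝ) : ℂ)) := hTint.comp_add_left x
    have hIsub : Integrable (fun h : ℝ =>
        (f x - f (x - h)) / ((|x - (x - h)| ^ (1 + γ) : ℝ) : ℂ)) := hTint.comp_sub_left x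
    have hadd : (∫ h : ℝ, (f x - f (x + h)) / ((|x - (x + h)| ^ (1 + γ) : ℝ) : ℂ))
        = ∫ y : ℝ, (f x - f y) / ((|x - y| ^ (1 + γ) : ℝ) : ℂ) :=
      integral_add_left_eq_self (fun y : ℝ => (f x - f y) / ((|x - y| ^ (1 + γ) : ℝ) : ℂ)) x
    have hsub : (∫ h : ℝ, (f x - f (x - h)) / ((|x - (x - h)| ^ (1 + γ) : ℝ) : ℂ))
        = ∫ y : ℝ, (f x - f y) / ((|x - y| ^ (1 + γ) : ℝ) : ℂ) :=
      integral_sub_left_eq_self (fun y : ℝ => (f x - f y) / ((|x - y| ^ (1 + γ) : ℝ) : ℂ)) volume x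
    rw [step4, integral_smul, integral_add hIadd hIsub, hadd, hsub, smul_smul, Complex.real_smul]
    push_cast
    ring
  refine ⟨⟨(2 * π) ^ γ / Kc γ, main⟩, ?_⟩
  set A : ℝ := ∫ h : ℝ, min (|h| ^ (-γ)) (|h| ^ (-(1 + γ))) with hA
  have hA0 : 0 ≤ A := integral_nonneg fun h =>
    le_min (Real.rpow_nonneg (abs_nonneg _) _) (Real.rpow_nonneg (abs_nonneg _) _)
  refine ⟨2 * |(2 * π) ^ γ / Kc γ| * A + 1, by positivity, ?_⟩
  intro f x
  have hbddM : BddAbove (Set.range fun y : ℝ => ‖f y‖) := by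
    refine ⟨(SchwartzMap.seminorm ℝ 0 0) f, ?_⟩
    rintro _ ⟨y, rfl⟩
    exact SchwartzMap.norm_le_seminorm ℝ f y
  have hbddM' : BddAbove (Set.range fun y : ℝ => ‖deriv (fun z : ℝ => f z) y‖) := by
    refine ⟨(SchwartzMap.seminorm ℝ 0 0) (SchwartzMap.derivCLM ℝ ℂ f), ?_⟩
    rintro _ ⟨y, rfl⟩
    show ‖deriv (⇑f) y‖ ≤ _
    rw [← SchwartzMap.derivCLM_apply (𝕜 := ℝ)]
    exact SchwartzMap.norm_le_seminorm ℝ _ y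
  set M : ℝ := ⨆ y : ℝ, ‖f y‖ with hMdef
  set M' : ℝ := ⨆ y : ℝ, ‖deriv (fun z : ℝ => f z) y‖ with hM'def
  have hMb : ∀ y, ‖f y‖ ≤ M := fun y => le_ciSup hbddM y
  have hM'b : ∀ y, ‖deriv (⇑f) y‖ ≤ M' := fun y => le_ciSup hbddM' y
  have hM0 : 0 ≤ M := le_trans (norm_nonneg _) (hMb 0)
  have hM'0 : 0 ≤ M' := le_trans (norm_nonneg _) (hM'b 0)
  rw [main f x, norm_mul, Complex.norm_real]
  have hle : ‖∫ y : ℝ, (f x - f y) / ((|x - y| ^ (1 + γ) : ℝ) : ℂ)‖ ≤ (2 * M + M') * A := by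
    calc ‖∫ y : ℝ, (f x - f y) / ((|x - y| ^ (1 + γ) : ℝ) : ℂ)‖
        ≤ ∫ y : ℝ, (2 * M + M') * min (|x - y| ^ (-γ)) (|x - y| ^ (-(1 + γ))) := by
          apply norm_integral_le_of_norm_le
            (((psi_integrable h0 h1).comp_sub_left x).const_mul _)
          exact ae_of_all _ (fun y => T_bound h0 h1 f x hMb hM'b y)
      _ = (2 * M + M') * ∫ y : ℝ, min (|x - y| ^ (-γ)) (|x - y| ^ (-(1 + γ))) :=
          integral_const_mul _ _
      _ = (2 * M + M') * A := by
          rw [hA]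
          congr 1
          exact integral_sub_left_eq_self
            (fun h : ℝ => min (|h| ^ (-γ)) (|h| ^ (-(1 + γ)))) volume x
  calc ‖((2 * π) ^ γ / Kc γ : ℝ)‖ * ‖∫ y : ℝ, (f x - f y) / ((|x - y| ^ (1 + γ) : ℝ) : ℂ)‖
      ≤ ‖((2 * π) ^ γ / Kc γ : ℝ)‖ * ((2 * M + M') * A) :=
        mul_le_mul_of_nonneg_left hle (norm_nonneg _)
    _ ≤ (2 * |(2 * π) ^ γ / Kc γ| * A + 1) * (M + M') := by
        rw [Real.norm_eq_abs]
        nlinarith [abs_nonneg ((2 * π) ^ γ / Kc γ), hA0, hM0, hM'0,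
          mul_nonneg (mul_nonneg (abs_nonneg ((2 * π) ^ γ / Kc γ)) hA0) hM'0,
          mul_nonneg (mul_nonneg (abs_nonneg ((2 * π) ^ γ / Kc γ)) hA0) hM0]
end

section
/- Let ζ, η ∈ (0,3) with ζ + η < 3 and let C > 0. Then uniformly over z ∈ ℝ², ∫_{{w : ‖w‖ ≤ C, ‖z-w‖ ≤ C}} ‖w‖^{-ζ} ‖z - w‖^{-η} dw ≲ C^{3-ζ-η}, where ‖(t,x)‖ = √|t| + |x|. -/
open MeasureTheory Real

/-- The parabolic norm `‖(t,x)‖ = √|t| + |x|` on `ℝ²`. -/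
noncomputable def pnorm (z : ℝ × ℝ) : ℝ := Real.sqrt |z.1| + |z.2|

lemma pnorm_nonneg (z : ℝ × ℝ) : 0 ≤ pnorm z :=
  add_nonneg (Real.sqrt_nonneg _) (abs_nonneg _)

lemma pnorm_meas : Measurable pnorm :=
  (((Real.continuous_sqrt.comp continuous_fst.abs).add continuous_snd.abs) :
    Continuous pnorm).measurable

lemma pnorm_rpow_meas (a : ℝ) : Measurable fun w : ℝ × ℝ => pnorm w ^ a := by
  have := pnorm_meas; measurability

lemma volume_pball {r : ℝ} (hr : 0 ≤ r) :
    volume {w : ℝ × ℝ | pnorm w ≤ r} ≤ ENNReal.ofReal (4 * r ^ 3) := by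
  have hsub : {w : ℝ × ℝ | pnorm w ≤ r} ⊆ Set.Icc (-(r^2)) (r^2) ×ˢ Set.Icc (-r) r := by
    intro w hw
    simp only [Set.mem_setOf_eq, pnorm] at hw
    have h1 : Real.sqrt |w.1| ≤ r := le_trans (le_add_of_nonneg_right (abs_nonneg _)) hw
    have h2 : |w.2| ≤ r := le_trans (le_add_of_nonneg_left (Real.sqrt_nonneg _)) hw
    have h1' : |w.1| ≤ r ^ 2 := by
      nlinarith [Real.sq_sqrt (abs_nonneg w.1), Real.sqrt_nonneg |w.1|]
    exact ⟨abs_le.1 h1', abs_le.1 h2⟩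
  calc volume {w : ℝ × ℝ | pnorm w ≤ r}
      ≤ volume (Set.Icc (-(r^2)) (r^2) ×ˢ Set.Icc (-r) r) := measure_mono hsub
    _ = ENNReal.ofReal (4 * r ^ 3) := by
        rw [Measure.volume_eq_prod, Measure.prod_prod, Real.volume_Icc, Real.volume_Icc,
          show r^2 - -(r^2) = 2*r^2 by ring, show r - -r = 2*r by ring,
          ← ENNReal.ofReal_mul (by positivity)]
        congr 1; ring

lemma key_int {a : ℝ} (ha : 0 < a) (ha3 : a < 3) {C : ℝ} (hC : 0 < C) :
    ∫⁻ w in {w : ℝ × ℝ | pnorm w ≤ C}, ENNReal.ofReal (pnorm w ^ (-a)) ≤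
      ENNReal.ofReal ((12 / (3 - a)) * C ^ (3 - a)) := by
  set s₀ : ℝ := C ^ (-a) with hs₀def
  have hs₀ : 0 < s₀ := Real.rpow_pos_of_pos hC _
  have h3a : (0:ℝ) < 3 - a := by linarith
  rw [lintegral_eq_lintegral_meas_lt _
    (Filter.Eventually.of_forall fun w => Real.rpow_nonneg (pnorm_nonneg w) _)
    (pnorm_rpow_meas (-a)).aemeasurable]
  have hsplit : Set.Ioi (0:ℝ) = Set.Ioc 0 s₀ ∪ Set.Ioi s₀ :=
    (Set.Ioc_union_Ioi_eq_Ioi hs₀.le).symm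
  rw [hsplit, lintegral_union measurableSet_Ioi Set.Ioc_disjoint_Ioi_same]
  have hq : -(3 / a) < -1 := by
    rw [neg_lt_neg_iff, lt_div_iff₀ ha]; linarith
  -- first piece
  have h1 : (∫⁻ t in Set.Ioc (0:ℝ) s₀,
      volume.restrict {w : ℝ × ℝ | pnorm w ≤ C} {w | t < pnorm w ^ (-a)}) ≤
      ENNReal.ofReal (4 * C ^ 3) * ENNReal.ofReal s₀ := by
    calc (∫⁻ t in Set.Ioc (0:ℝ) s₀,
        volume.restrict {w : ℝ × ℝ | pnorm w ≤ C} {w | t < pnorm w ^ (-a)})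
        ≤ ∫⁻ _ in Set.Ioc (0:ℝ) s₀, ENNReal.ofReal (4 * C ^ 3) := by
          refine lintegral_mono fun t => ?_
          calc volume.restrict {w : ℝ × ℝ | pnorm w ≤ C} {w | t < pnorm w ^ (-a)}
              ≤ volume.restrict {w : ℝ × ℝ | pnorm w ≤ C} Set.univ :=
                measure_mono (Set.subset_univ _)
            _ = volume {w : ℝ × ℝ | pnorm w ≤ C} := by
                rw [Measure.restrict_apply_univ]
            _ ≤ ENNReal.ofReal (4 * C ^ 3) := volume_pball hC.le
      _ = ENNReal.ofReal (4 * C ^ 3) * ENNReal.ofReal s₀ := by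
          rw [setLIntegral_const, Real.volume_Ioc, sub_zero]
  -- second piece
  have hsub2 : ∀ t : ℝ, s₀ < t →
      volume.restrict {w : ℝ × ℝ | pnorm w ≤ C} {w | t < pnorm w ^ (-a)} ≤
      ENNReal.ofReal (4 * (t ^ (-(1/a))) ^ 3) := by
    intro t ht
    have ht0 : 0 < t := hs₀.trans ht
    have hss : {w : ℝ × ℝ | t < pnorm w ^ (-a)} ⊆ {w | pnorm w ≤ t ^ (-(1/a))} := by
      intro w hw
      simp only [Set.mem_setOf_eq] at hw ⊢
      have hpw : 0 < pnorm w := by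
        rcases lt_or_eq_of_le (pnorm_nonneg w) with h | h
        · exact h
        · exfalso; rw [← h, Real.zero_rpow (by linarith : -a ≠ 0)] at hw; linarith
      have h2 := Real.rpow_lt_rpow_of_neg ht0 hw (neg_lt_zero.mpr (by positivity : (0:ℝ) < 1/a))
      rw [← Real.rpow_mul (pnorm_nonneg w)] at h2
      have hexp : -a * -(1/a) = 1 := by
        rw [neg_mul_neg, mul_one_div, div_self (ne_of_gt ha)]
      rw [hexp, Real.rpow_one] at h2
      exact h2.le
    calc volume.restrict {w : ℝ × ℝ | pnorm w ≤ C} {w | t < pnorm w ^ (-a)}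
        ≤ volume {w : ℝ × ℝ | t < pnorm w ^ (-a)} := Measure.restrict_apply_le _ _
      _ ≤ volume {w : ℝ × ℝ | pnorm w ≤ t ^ (-(1/a))} := measure_mono hss
      _ ≤ ENNReal.ofReal (4 * (t ^ (-(1/a))) ^ 3) :=
          volume_pball (Real.rpow_nonneg ht0.le _)
  have hpow3 : ∀ t : ℝ, s₀ < t → (t ^ (-(1/a))) ^ 3 = t ^ (-(3/a)) := by
    intro t ht
    have ht0 : 0 < t := hs₀.trans ht
    rw [← Real.rpow_natCast (t ^ (-(1/a))) 3, ← Real.rpow_mul ht0.le]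
    congr 1
    push_cast; field_simp
  have hint : IntegrableOn (fun t : ℝ => t ^ (-(3/a))) (Set.Ioi s₀) :=
    integrableOn_Ioi_rpow_of_lt hq hs₀
  have h2 : (∫⁻ t in Set.Ioi s₀,
      volume.restrict {w : ℝ × ℝ | pnorm w ≤ C} {w | t < pnorm w ^ (-a)}) ≤
      ENNReal.ofReal (4 * (-s₀ ^ (-(3/a) + 1) / (-(3/a) + 1))) := by
    calc (∫⁻ t in Set.Ioi s₀,
        volume.restrict {w : ℝ × ℝ | pnorm w ≤ C} {w | t < pnorm w ^ (-a)})
        ≤ ∫⁻ t in Set.Ioi s₀, ENNReal.ofReal (4 * t ^ (-(3/a))) := by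
          refine setLIntegral_mono' measurableSet_Ioi fun t ht => ?_
          have h := hsub2 t ht
          rwa [hpow3 t ht] at h
      _ = ENNReal.ofReal (∫ t in Set.Ioi s₀, 4 * t ^ (-(3/a))) := by
          rw [ofReal_integral_eq_lintegral_ofReal (hint.const_mul 4)]
          refine (ae_restrict_iff' measurableSet_Ioi).2 (Filter.Eventually.of_forall
            fun t ht => ?_)
          have ht0 : (0:ℝ) < t := hs₀.trans ht
          positivity
      _ = ENNReal.ofReal (4 * (-s₀ ^ (-(3/a) + 1) / (-(3/a) + 1))) := by
          rw [MeasureTheory.integral_const_mul, integral_Ioi_rpow_of_lt hq hs₀]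
  refine le_trans (add_le_add h1 h2) ?_
  have e1 : s₀ ^ (-(3/a) + 1) = C ^ (3 - a) := by
    rw [hs₀def, ← Real.rpow_mul hC.le]
    congr 1
    field_simp
    ring
  have e2 : 4 * C ^ 3 * s₀ = 4 * C ^ (3 - a) := by
    rw [hs₀def, ← Real.rpow_natCast C 3, mul_assoc, ← Real.rpow_add hC]
    norm_num [← sub_eq_add_neg]
  have e3 : -s₀ ^ (-(3/a) + 1) / (-(3/a) + 1) = C ^ (3-a) * (a / (3 - a)) := by
    rw [e1]
    have hne : -(3/a) + 1 ≠ 0 := by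
      intro h
      have h' : (3:ℝ)/a = 1 := by linarith
      rw [div_eq_one_iff_eq (ne_of_gt ha)] at h'
      linarith
    have hd : -(3/a) + 1 = -((3-a)/a) := by field_simp; ring
    rw [hd, div_neg, neg_div, neg_neg, div_div_eq_mul_div, mul_div_assoc]
  rw [← ENNReal.ofReal_mul (by positivity), e2, e3,
    ← ENNReal.ofReal_add (by positivity) (by positivity)]
  refine ENNReal.ofReal_le_ofReal (le_of_eq ?_)
  have hkey : (4:ℝ) + 4 * (a/(3-a)) = 12/(3-a) := by
    field_simp
    ring
  calc 4 * C ^ (3-a) + 4 * (C ^ (3-a) * (a/(3-a)))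
      = (4 + 4 * (a/(3-a))) * C ^ (3-a) := by ring
    _ = 12/(3-a) * C ^ (3-a) := by rw [hkey]

lemma pointwise_bd {ζ η : ℝ} (hζ0 : 0 < ζ) (hη0 : 0 < η) {u v : ℝ} (hu : 0 ≤ u)
    (hv : 0 ≤ v) (huv : v ≤ u) :
    u ^ (-ζ) * v ^ (-η) ≤ v ^ (-(ζ + η)) := by
  rcases eq_or_lt_of_le hv with h | hv0
  · rw [← h, Real.zero_rpow (by linarith : -η ≠ 0),
      Real.zero_rpow (by intro hc; apply absurd (neg_eq_zero.mp hc); linarith), mul_zero]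
  · have h1 : u ^ (-ζ) ≤ v ^ (-ζ) :=
      Real.rpow_le_rpow_of_nonpos hv0 huv (by linarith)
    calc u ^ (-ζ) * v ^ (-η) ≤ v ^ (-ζ) * v ^ (-η) :=
        mul_le_mul_of_nonneg_right h1 (Real.rpow_nonneg hv0.le _)
      _ = v ^ (-(ζ + η)) := by rw [← Real.rpow_add hv0, neg_add]

/-- For `ζ, η ∈ (0,3)` with `ζ + η < 3` and `C > 0`, uniformly over `z ∈ ℝ²`:
`∫_{‖w‖ ≤ C, ‖z-w‖ ≤ C} ‖w‖^{-ζ} ‖z-w‖^{-η} dw ≲ C^{3-ζ-η}`,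
with implied constant depending only on `ζ, η`. -/
theorem stmt6 (ζ η : ℝ) (hζ : ζ ∈ Set.Ioo (0:ℝ) 3) (hη : η ∈ Set.Ioo (0:ℝ) 3)
    (hsum : ζ + η < 3) :
    ∃ C' : ℝ, 0 < C' ∧ ∀ C : ℝ, 0 < C → ∀ z : ℝ × ℝ,
      ∫⁻ w in {w : ℝ × ℝ | pnorm w ≤ C ∧ pnorm (z - w) ≤ C},
        ENNReal.ofReal (pnorm w ^ (-ζ) * pnorm (z - w) ^ (-η)) ≤
        ENNReal.ofReal (C' * C ^ (3 - ζ - η)) := by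
  obtain ⟨hζ0, hζ3⟩ := hζ
  obtain ⟨hη0, hη3⟩ := hη
  have h3a : (0:ℝ) < 3 - (ζ + η) := by linarith
  refine ⟨24 / (3 - (ζ + η)), by positivity, fun C hC z => ?_⟩
  set a : ℝ := ζ + η with ha_def
  have ha0 : 0 < a := by positivity
  set F : ℝ × ℝ → ENNReal := fun w => ENNReal.ofReal (pnorm w ^ (-ζ) * pnorm (z - w) ^ (-η))
    with hF
  set S : Set (ℝ × ℝ) := {w | pnorm w ≤ C ∧ pnorm (z - w) ≤ C} with hSdef
  have hzw_meas : Measurable fun w : ℝ × ℝ => pnorm (z - w) :=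
    pnorm_meas.comp (measurable_const.sub measurable_id)
  have hA : MeasurableSet {w : ℝ × ℝ | pnorm (z - w) ≤ pnorm w} :=
    measurableSet_le hzw_meas pnorm_meas
  have hB : MeasurableSet {w : ℝ × ℝ | pnorm w ≤ pnorm (z - w)} :=
    measurableSet_le pnorm_meas hzw_meas
  have hSm : MeasurableSet S := by
    refine MeasurableSet.inter ?_ ?_
    · exact measurableSet_le pnorm_meas measurable_const
    · exact measurableSet_le hzw_meas measurable_const
  have hScover : S ⊆ (S ∩ {w | pnorm (z - w) ≤ pnorm w}) ∪
      (S ∩ {w | pnorm w ≤ pnorm (z - w)}) := by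
    intro w hw
    rcases le_total (pnorm (z - w)) (pnorm w) with h | h
    · exact Or.inl ⟨hw, h⟩
    · exact Or.inr ⟨hw, h⟩
  have step1 : (∫⁻ w in S, F w) ≤
      (∫⁻ w in S ∩ {w | pnorm (z - w) ≤ pnorm w}, F w) +
      (∫⁻ w in S ∩ {w | pnorm w ≤ pnorm (z - w)}, F w) :=
    le_trans (lintegral_mono_set hScover) (lintegral_union_le _ _ _)
  -- first half
  have half1 : (∫⁻ w in S ∩ {w | pnorm (z - w) ≤ pnorm w}, F w) ≤
      ENNReal.ofReal ((12 / (3 - a)) * C ^ (3 - a)) := by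
    calc (∫⁻ w in S ∩ {w | pnorm (z - w) ≤ pnorm w}, F w)
        ≤ ∫⁻ w in S ∩ {w | pnorm (z - w) ≤ pnorm w},
            ENNReal.ofReal (pnorm (z - w) ^ (-a)) := by
          refine setLIntegral_mono' (hSm.inter hA) fun w hw => ?_
          exact ENNReal.ofReal_le_ofReal
            (pointwise_bd hζ0 hη0 (pnorm_nonneg w) (pnorm_nonneg (z - w)) hw.2)
      _ ≤ ∫⁻ w in {w : ℝ × ℝ | pnorm (z - w) ≤ C},
            ENNReal.ofReal (pnorm (z - w) ^ (-a)) := by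
          refine lintegral_mono_set fun w hw => ?_
          exact hw.1.2
      _ = ∫⁻ u in {u : ℝ × ℝ | pnorm u ≤ C}, ENNReal.ofReal (pnorm u ^ (-a)) := by
          have hmp : MeasurePreserving (fun w : ℝ × ℝ => z - w) volume volume :=
            Measure.measurePreserving_sub_left volume z
          have hemb : MeasurableEmbedding (fun w : ℝ × ℝ => z - w) :=
            (MeasurableEquiv.subLeft z).measurableEmbedding
          exact hmp.setLIntegral_comp_preimage_emb hemb
            (fun u => ENNReal.ofReal (pnorm u ^ (-a))) {u | pnorm u ≤ C}
      _ ≤ ENNReal.ofReal ((12 / (3 - a)) * C ^ (3 - a)) :=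
          key_int ha0 (by linarith) hC
  -- second half
  have half2 : (∫⁻ w in S ∩ {w | pnorm w ≤ pnorm (z - w)}, F w) ≤
      ENNReal.ofReal ((12 / (3 - a)) * C ^ (3 - a)) := by
    calc (∫⁻ w in S ∩ {w | pnorm w ≤ pnorm (z - w)}, F w)
        ≤ ∫⁻ w in S ∩ {w | pnorm w ≤ pnorm (z - w)},
            ENNReal.ofReal (pnorm w ^ (-a)) := by
          refine setLIntegral_mono' (hSm.inter hB) fun w hw => ?_
          refine ENNReal.ofReal_le_ofReal ?_
          have h := pointwise_bd hη0 hζ0 (pnorm_nonneg (z - w)) (pnorm_nonneg w) hw.2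
          calc pnorm w ^ (-ζ) * pnorm (z - w) ^ (-η)
              = pnorm (z - w) ^ (-η) * pnorm w ^ (-ζ) := by ring
            _ ≤ pnorm w ^ (-(η + ζ)) := h
            _ = pnorm w ^ (-a) := by rw [ha_def, add_comm]
      _ ≤ ∫⁻ w in {w : ℝ × ℝ | pnorm w ≤ C}, ENNReal.ofReal (pnorm w ^ (-a)) := by
          refine lintegral_mono_set fun w hw => ?_
          exact hw.1.1
      _ ≤ ENNReal.ofReal ((12 / (3 - a)) * C ^ (3 - a)) :=
          key_int ha0 (by linarith) hC
  refine le_trans step1 (le_trans (add_le_add half1 half2) ?_)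
  rw [← ENNReal.ofReal_add (by positivity) (by positivity)]
  refine ENNReal.ofReal_le_ofReal (le_of_eq ?_)
  have : 3 - ζ - η = 3 - a := by rw [ha_def]; ring
  rw [this]
  ring
end
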